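/- arXiv:1903.10145 — 2 statements merged into one kernel-verified Lean document; each statement's English description precedes it below -/
import Mathlib

section
/- Let Z be a nonempty finite type, let N be a positive integer indexing data samples, let q(·|n) for each n ∈ {1,…,N} be a probability mass function on Z (the encoder posteriors), and let p(·|z) for each z ∈ Z be a probability mass function on {1,…,N} (the decoder), with p(n|z) > 0 whenever q(z|n) > 0. Define the joint distribution q(z,n) = q(z|n)·(1/N) on Z × {1,…,N}. Then the expected reconstruction log-likelihood plus the entropy of the uniform index distribution lower-bounds the mutual information: (1/N)·∑_{n} ∑_{z: q(z|n)>0} q(z|n) log p(n|z) + log N ≤ I_q(Z,n), i.e., the reconstruction term F_E = E_{q(z,n)}[log p(n|z)] + H_q(n) satisfies F_E ≤ I_q(Z,n). -/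
/-- Gibbs-type inequality per z: for nonnegative weights `a` with sum `s`,
and a subprobability `p` positive where `a` is positive,
`∑_{a>0} a log p ≤ ∑_{a>0} a log (a/s)`. -/
lemma gibbs_aux {N : ℕ} (a p : Fin N → ℝ)
    (ha : ∀ n, 0 ≤ a n) (hp : ∀ n, 0 ≤ p n) (hps : ∑ n, p n = 1)
    (habs : ∀ n, 0 < a n → 0 < p n) :
    ∑ n ∈ Finset.univ.filter (fun n => 0 < a n), a n * Real.log (p n) ≤
      ∑ n ∈ Finset.univ.filter (fun n => 0 < a n),
        a n * Real.log (a n / ∑ m, a m) := by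
  set S := Finset.univ.filter (fun n => 0 < a n) with hS
  rcases S.eq_empty_or_nonempty with h | ⟨n0, hn0⟩
  · simp [h]
  · set s := ∑ m, a m with hs_def
    have hn0' : 0 < a n0 := by
      simpa [hS] using (Finset.mem_filter.mp hn0).2
    have hs : 0 < s := lt_of_lt_of_le hn0'
      (Finset.single_le_sum (fun n _ => ha n) (Finset.mem_univ n0))
    have hsS : ∑ n ∈ S, a n = s := by
      rw [hs_def]
      apply Finset.sum_subset (Finset.subset_univ S)
      intro n _ hn
      have : ¬ 0 < a n := by simpa [hS] using hn
      linarith [ha n]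
    have key : ∀ n ∈ S, a n * Real.log (p n) ≤
        a n * Real.log (a n / s) + (s * p n - a n) := by
      intro n hn
      have han : 0 < a n := by simpa [hS] using (Finset.mem_filter.mp hn).2
      have hpn : 0 < p n := habs n han
      have hx : 0 < s * p n / a n := by positivity
      have hlog := Real.log_le_sub_one_of_pos hx
      have h1 : Real.log (p n) =
          Real.log (s * p n / a n) + Real.log (a n / s) := by
        rw [Real.log_div (by positivity) han.ne',
          Real.log_div han.ne' hs.ne', Real.log_mul hs.ne' hpn.ne']
        ring
      have h2 : a n * Real.log (s * p n / a n) ≤ s * p n - a n := by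
        have := mul_le_mul_of_nonneg_left hlog han.le
        have heq : a n * (s * p n / a n - 1) = s * p n - a n := by
          field_simp
        linarith [heq ▸ this]
      calc a n * Real.log (p n)
          = a n * Real.log (s * p n / a n) + a n * Real.log (a n / s) := by
            rw [h1]; ring
        _ ≤ (s * p n - a n) + a n * Real.log (a n / s) := by linarith
        _ = a n * Real.log (a n / s) + (s * p n - a n) := by ring
    have hsum := Finset.sum_le_sum key
    rw [Finset.sum_add_distrib] at hsum
    have hrest : ∑ n ∈ S, (s * p n - a n) ≤ 0 := by
      rw [Finset.sum_sub_distrib, hsS, ← Finset.mul_sum]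
      have hple : ∑ n ∈ S, p n ≤ 1 := by
        rw [← hps]
        exact Finset.sum_le_sum_of_subset_of_nonneg (Finset.subset_univ S)
          (fun n _ _ => hp n)
      nlinarith
    linarith

/-- With encoder posteriors `q(·|n)` on `Z` for `n ∈ {1,…,N}` (index uniform),
decoder `p(·|z)` on the index set with `p(n|z) > 0` whenever `q(z|n) > 0`, and joint
`q(z,n) = q(z|n)/N`, the reconstruction term lower-bounds the mutual information:
`(1/N)·∑_n ∑_{z: q(z|n)>0} q(z|n) log p(n|z) + log N ≤ I_q(Z,n)`,
where `I_q(Z,n) = H_q(n) - H_q(n|Z) = log N - H_q(n|Z)` and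
`H_q(n|Z) = -∑_{(z,n): q(z,n)>0} q(z,n) log(q(z,n)/q̄(z))` with
`q̄(z) = (1/N)∑_n q(z|n)`. -/
theorem reconstruction_le_mutual_information
    {Z : Type*} [Fintype Z] [Nonempty Z] (N : ℕ) (hN : 0 < N)
    (q : Fin N → Z → ℝ) (p : Z → Fin N → ℝ)
    (hq_nonneg : ∀ n z, 0 ≤ q n z) (hq_sum : ∀ n, ∑ z : Z, q n z = 1)
    (hp_nonneg : ∀ z n, 0 ≤ p z n) (hp_sum : ∀ z, ∑ n : Fin N, p z n = 1)
    (habs : ∀ n z, 0 < q n z → 0 < p z n) :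
    (1 / (N : ℝ)) *
        (∑ n : Fin N, ∑ z ∈ Finset.univ.filter (fun z : Z => 0 < q n z),
          q n z * Real.log (p z n)) + Real.log N ≤
      Real.log N -
        (-∑ zn ∈ Finset.univ.filter
              (fun zn : Z × Fin N => 0 < q zn.2 zn.1 / (N : ℝ)),
            (q zn.2 zn.1 / (N : ℝ)) *
              Real.log ((q zn.2 zn.1 / (N : ℝ)) /
                ((1 / (N : ℝ)) * ∑ n' : Fin N, q n' zn.1))) := by
  have hNR : (0:ℝ) < N := by exact_mod_cast hN
  rw [sub_neg_eq_add, add_comm (Real.log (N:ℝ))]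
  apply add_le_add_left
  -- Rewrite RHS sum over pairs as a double sum over z then n.
  have hRHS : (∑ zn ∈ Finset.univ.filter
        (fun zn : Z × Fin N => 0 < q zn.2 zn.1 / (N : ℝ)),
        (q zn.2 zn.1 / (N : ℝ)) *
          Real.log ((q zn.2 zn.1 / (N : ℝ)) /
            ((1 / (N : ℝ)) * ∑ n' : Fin N, q n' zn.1)))
      = ∑ z : Z, ∑ n ∈ Finset.univ.filter (fun n : Fin N => 0 < q n z),
          (q n z / (N : ℝ)) * Real.log (q n z / ∑ n' : Fin N, q n' z) := by
    rw [Finset.sum_filter, Fintype.sum_prod_type]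
    refine Finset.sum_congr rfl fun z _ => ?_
    rw [Finset.sum_filter]
    refine Finset.sum_congr rfl fun n _ => ?_
    have hiff : (0 < q n z / (N : ℝ)) ↔ (0 < q n z) := by
      constructor
      · intro h
        rcases div_pos_iff.mp h with ⟨h1, _⟩ | ⟨_, h2⟩
        · exact h1
        · linarith
      · intro h; positivity
    by_cases h : 0 < q n z
    · have harg : (q n z / (N : ℝ)) / ((1 / (N : ℝ)) * ∑ n' : Fin N, q n' z)
          = q n z / ∑ n' : Fin N, q n' z := by
        rcases eq_or_ne (∑ n' : Fin N, q n' z) 0 with h0 | h0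
        · simp [h0]
        · field_simp
      rw [if_pos (hiff.mpr h), if_pos h, harg]
    · simp [h, (not_iff_not.mpr hiff).mpr h]
  rw [hRHS]
  -- Rewrite LHS similarly.
  have hLHS : (1 / (N : ℝ)) *
      (∑ n : Fin N, ∑ z ∈ Finset.univ.filter (fun z : Z => 0 < q n z),
        q n z * Real.log (p z n))
      = ∑ z : Z, ∑ n ∈ Finset.univ.filter (fun n : Fin N => 0 < q n z),
          (q n z / (N : ℝ)) * Real.log (p z n) := by
    rw [Finset.mul_sum]
    rw [show (∑ n : Fin N, (1 / (N : ℝ)) *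
        ∑ z ∈ Finset.univ.filter (fun z : Z => 0 < q n z),
          q n z * Real.log (p z n))
      = ∑ n : Fin N, ∑ z : Z, (if 0 < q n z then
          (q n z / (N : ℝ)) * Real.log (p z n) else 0) from
      Finset.sum_congr rfl fun n _ => by
        rw [Finset.mul_sum, Finset.sum_filter]
        refine Finset.sum_congr rfl fun z _ => ?_
        by_cases h : 0 < q n z <;> simp [h] <;> ring]
    rw [Finset.sum_comm]
    exact Finset.sum_congr rfl fun z _ => by rw [Finset.sum_filter]
  rw [hLHS]
  apply Finset.sum_le_sum
  intro z _
  have := gibbs_aux (fun n => q n z) (fun n => p z n)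
    (fun n => hq_nonneg n z) (fun n => hp_nonneg z n) (hp_sum z)
    (fun n h => habs n z h)
  calc ∑ n ∈ Finset.univ.filter (fun n : Fin N => 0 < q n z),
        (q n z / (N : ℝ)) * Real.log (p z n)
      = (1 / (N : ℝ)) * ∑ n ∈ Finset.univ.filter (fun n : Fin N => 0 < q n z),
          q n z * Real.log (p z n) := by
        rw [Finset.mul_sum]; exact Finset.sum_congr rfl fun n _ => by ring
    _ ≤ (1 / (N : ℝ)) * ∑ n ∈ Finset.univ.filter (fun n : Fin N => 0 < q n z),
          q n z * Real.log (q n z / ∑ n' : Fin N, q n' z) := by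
        apply mul_le_mul_of_nonneg_left this (by positivity)
    _ = ∑ n ∈ Finset.univ.filter (fun n : Fin N => 0 < q n z),
          (q n z / (N : ℝ)) * Real.log (q n z / ∑ n' : Fin N, q n' z) := by
        rw [Finset.mul_sum]; exact Finset.sum_congr rfl fun n _ => by ring
end

section
/- Let Z be a nonempty finite type, let N be a positive integer, let q(·|n) for each n ∈ {1,…,N} be a probability mass function on Z (the encoder posteriors), let p be a probability mass function on Z (the prior) with p(z) > 0 for all z, and let p(·|z) for each z ∈ Z be a probability mass function on {1,…,N} (the decoder) with p(n|z) > 0 whenever q(z|n) > 0. Define F_E = (1/N)∑_n ∑_{z: q(z|n)>0} q(z|n) log p(n|z) + log N and F_R = (1/N)∑_n KL(q(·|n) ‖ p), and let β ∈ ℝ. Then the β-weighted training objective F = -F_E + β·F_R satisfies the lower bound F ≥ (β - 1)·I_q(Z,n) + β·KL(q̄ ‖ p), where q̄(z) = (1/N)∑_n q(z|n) is the aggregated posterior. -/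
lemma gibbs_aux_s6 {A : Type*} [Fintype A] (μ ν : A → ℝ)
    (hμ : ∀ a, 0 ≤ μ a) (hν : ∀ a, 0 ≤ ν a)
    (hμs : ∑ a : A, μ a = 1) (hνs : ∑ a : A, ν a ≤ 1)
    (hac : ∀ a, 0 < μ a → 0 < ν a) :
    0 ≤ ∑ a : A, μ a * Real.log (μ a / ν a) := by
  have key : ∀ a, μ a * Real.log (ν a / μ a) ≤ ν a - μ a := by
    intro a
    rcases eq_or_lt_of_le (hμ a) with h | h
    · simp [← h]; exact hν a
    · have hν' := hac a h
      have hlog : Real.log (ν a / μ a) ≤ ν a / μ a - 1 :=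
        Real.log_le_sub_one_of_pos (div_pos hν' h)
      have := mul_le_mul_of_nonneg_left hlog (le_of_lt h)
      have he : μ a * (ν a / μ a - 1) = ν a - μ a := by field_simp
      linarith [he ▸ this]
  have h1 : ∑ a : A, μ a * Real.log (ν a / μ a) ≤ 0 := by
    calc ∑ a : A, μ a * Real.log (ν a / μ a) ≤ ∑ a : A, (ν a - μ a) :=
          Finset.sum_le_sum (fun a _ => key a)
      _ ≤ 0 := by rw [Finset.sum_sub_distrib, hμs]; linarith
  have h2 : ∀ a, μ a * Real.log (μ a / ν a) = -(μ a * Real.log (ν a / μ a)) := by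
    intro a
    rcases eq_or_lt_of_le (hμ a) with h | h
    · simp [← h]
    · rw [Real.log_div (ne_of_gt (hac a h)) (ne_of_gt h),
        Real.log_div (ne_of_gt h) (ne_of_gt (hac a h))]; ring
  simp_rw [h2, Finset.sum_neg_distrib]
  linarith



/-- With encoder posteriors `q(·|n)`, an everywhere-positive prior `p`,
and a decoder `pd(·|z)` with `pd(n|z) > 0` whenever `q(z|n) > 0`, set
`F_E = (1/N)∑_n ∑_{z: q(z|n)>0} q(z|n) log pd(n|z) + log N` and
`F_R = (1/N)∑_n KL(q(·|n)‖p)`. Then for any `β ∈ ℝ`, the objective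
`F = -F_E + β·F_R` satisfies `F ≥ (β-1)·I_q(Z,n) + β·KL(q̄‖p)`, where
`q̄(z) = (1/N)∑_n q(z|n)` and
`I_q(Z,n) = ∑_{(z,n): q(z,n)>0} q(z,n) log(q(z,n)/(q̄(z)·(1/N)))`
with joint `q(z,n) = q(z|n)/N`. -/
theorem beta_objective_lower_bound
    {Z : Type*} [Fintype Z] [Nonempty Z] (N : ℕ) (hN : 0 < N)
    (q : Fin N → Z → ℝ) (p : Z → ℝ) (pd : Z → Fin N → ℝ) (β : ℝ)
    (hq_nonneg : ∀ n z, 0 ≤ q n z) (hq_sum : ∀ n, ∑ z : Z, q n z = 1)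
    (hp_pos : ∀ z, 0 < p z) (hp_sum : ∑ z : Z, p z = 1)
    (hpd_nonneg : ∀ z n, 0 ≤ pd z n) (hpd_sum : ∀ z, ∑ n : Fin N, pd z n = 1)
    (habs : ∀ n z, 0 < q n z → 0 < pd z n) :
    -((1 / (N : ℝ)) *
          (∑ n : Fin N, ∑ z ∈ Finset.univ.filter (fun z : Z => 0 < q n z),
            q n z * Real.log (pd z n)) + Real.log N) +
        β * ((1 / (N : ℝ)) *
          ∑ n : Fin N, ∑ z ∈ Finset.univ.filter (fun z : Z => 0 < q n z),
            q n z * Real.log (q n z / p z)) ≥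
      (β - 1) *
          (∑ zn ∈ Finset.univ.filter
                (fun zn : Z × Fin N => 0 < q zn.2 zn.1 / (N : ℝ)),
              (q zn.2 zn.1 / (N : ℝ)) *
                Real.log ((q zn.2 zn.1 / (N : ℝ)) /
                  (((1 / (N : ℝ)) * ∑ n' : Fin N, q n' zn.1) * (1 / (N : ℝ))))) +
        β * ∑ z ∈ Finset.univ.filter
                (fun z : Z => 0 < (1 / (N : ℝ)) * ∑ n' : Fin N, q n' z),
              ((1 / (N : ℝ)) * ∑ n' : Fin N, q n' z) *
                Real.log (((1 / (N : ℝ)) * ∑ n' : Fin N, q n' z) / p z) := by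
  have hNr : (0:ℝ) < (N:ℝ) := by exact_mod_cast hN
  have hNr0 : (N:ℝ) ≠ 0 := ne_of_gt hNr
  -- aggregated posterior
  set qb : Z → ℝ := fun z => (1 / (N:ℝ)) * ∑ n' : Fin N, q n' z with hqb_def
  have hqb_nonneg : ∀ z, 0 ≤ qb z := by
    intro z
    exact mul_nonneg (by positivity) (Finset.sum_nonneg fun n _ => hq_nonneg n z)
  have hqb_pos : ∀ n z, 0 < q n z → 0 < qb z := by
    intro n z h
    have : q n z ≤ ∑ n' : Fin N, q n' z :=
      Finset.single_le_sum (fun i _ => hq_nonneg i z) (Finset.mem_univ n)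
    have : 0 < ∑ n' : Fin N, q n' z := lt_of_lt_of_le h this
    positivity
  have hqb_sum : ∑ z : Z, qb z = 1 := by
    simp only [hqb_def]
    rw [← Finset.mul_sum, Finset.sum_comm]
    simp [hq_sum]
    field_simp
  -- remove filters
  have hf1 : ∀ (n : Fin N) (g : Z → ℝ),
      ∑ z ∈ Finset.univ.filter (fun z : Z => 0 < q n z), q n z * g z
        = ∑ z : Z, q n z * g z := by
    intro n g
    apply Finset.sum_filter_of_ne
    intro z _ hz
    rcases eq_or_lt_of_le (hq_nonneg n z) with h | h
    · exact absurd (by rw [← h]; ring) hz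
    · exact h
  have hf2 : (∑ zn ∈ Finset.univ.filter
                (fun zn : Z × Fin N => 0 < q zn.2 zn.1 / (N : ℝ)),
              (q zn.2 zn.1 / (N : ℝ)) *
                Real.log ((q zn.2 zn.1 / (N : ℝ)) / (qb zn.1 * (1 / (N : ℝ)))))
      = ∑ zn : Z × Fin N, (q zn.2 zn.1 / (N : ℝ)) *
                Real.log ((q zn.2 zn.1 / (N : ℝ)) / (qb zn.1 * (1 / (N : ℝ)))) := by
    apply Finset.sum_filter_of_ne
    intro zn _ hzn
    rcases eq_or_lt_of_le (div_nonneg (hq_nonneg zn.2 zn.1) (le_of_lt hNr)) with h | h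
    · exact absurd (by rw [← h]; ring) hzn
    · exact h
  have hf3 : (∑ z ∈ Finset.univ.filter (fun z : Z => 0 < qb z),
              qb z * Real.log (qb z / p z))
      = ∑ z : Z, qb z * Real.log (qb z / p z) := by
    apply Finset.sum_filter_of_ne
    intro z _ hz
    rcases eq_or_lt_of_le (hqb_nonneg z) with h | h
    · exact absurd (by rw [← h]; ring) hz
    · exact h
  rw [hf2, hf3]
  simp only [hf1]
  -- abbreviations for full sums
  set A := ∑ n : Fin N, ∑ z : Z, q n z * Real.log (pd z n) with hA
  set B := ∑ n : Fin N, ∑ z : Z, q n z * Real.log (q n z / p z) with hB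
  set I2 := ∑ n : Fin N, ∑ z : Z, q n z * Real.log (q n z / qb z) with hI2
  set K := ∑ z : Z, qb z * Real.log (qb z / p z) with hK
  -- the joint-sum mutual information equals (1/N) * I2
  have eI : (∑ zn : Z × Fin N, (q zn.2 zn.1 / (N : ℝ)) *
                Real.log ((q zn.2 zn.1 / (N : ℝ)) / (qb zn.1 * (1 / (N : ℝ)))))
      = (1 / (N:ℝ)) * I2 := by
    rw [Fintype.sum_prod_type]
    have hrhs : (1 / (N:ℝ)) * I2
        = ∑ z : Z, ∑ n : Fin N, (1 / (N:ℝ)) * (q n z * Real.log (q n z / qb z)) := by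
      rw [hI2, Finset.sum_comm, Finset.mul_sum]
      refine Finset.sum_congr rfl fun z _ => ?_
      rw [Finset.mul_sum]
    rw [hrhs]
    refine Finset.sum_congr rfl fun z _ => Finset.sum_congr rfl fun n _ => ?_
    have harg : (q n z / (N : ℝ)) / (qb z * (1 / (N : ℝ))) = q n z / qb z := by
      rw [mul_one_div, div_div_div_cancel_right₀ hNr0]
    rw [harg]; ring
  -- chain rule: B = I2 + N * K
  have eB : B = I2 + (N:ℝ) * K := by
    have hpt : ∀ (n : Fin N) (z : Z), q n z * Real.log (q n z / p z)
        = q n z * Real.log (q n z / qb z) + q n z * Real.log (qb z / p z) := by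
      intro n z
      rcases eq_or_lt_of_le (hq_nonneg n z) with h | h
      · rw [← h]; ring
      · have hq0 := ne_of_gt h
        have hqb0 := ne_of_gt (hqb_pos n z h)
        have hp0 := ne_of_gt (hp_pos z)
        rw [Real.log_div hq0 hp0, Real.log_div hq0 hqb0, Real.log_div hqb0 hp0]
        ring
    rw [hB]
    simp_rw [hpt, Finset.sum_add_distrib]
    rw [hI2, hK]
    congr 1
    rw [Finset.sum_comm, Finset.mul_sum]
    apply Finset.sum_congr rfl
    intro z _
    rw [← Finset.sum_mul]
    have : ∑ n : Fin N, q n z = (N:ℝ) * qb z := by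
      rw [hqb_def]; field_simp
    rw [this]; ring
  -- Gibbs: KL(joint ‖ qb ⊗ pd) ≥ 0, i.e. (1/N)*A + log N ≤ (1/N)*I2
  have key : (1 / (N:ℝ)) * A + Real.log N ≤ (1 / (N:ℝ)) * I2 := by
    have hG := gibbs_aux_s6 (A := Z × Fin N)
      (fun zn => q zn.2 zn.1 / (N:ℝ))
      (fun zn => qb zn.1 * pd zn.1 zn.2)
      (fun zn => div_nonneg (hq_nonneg zn.2 zn.1) (le_of_lt hNr))
      (fun zn => mul_nonneg (hqb_nonneg zn.1) (hpd_nonneg zn.1 zn.2))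
      (by
        rw [Fintype.sum_prod_type_right]
        simp_rw [← Finset.sum_div]
        simp [hq_sum]
        omega)
      (by
        rw [Fintype.sum_prod_type]
        simp_rw [← Finset.mul_sum]
        simp only [hpd_sum, mul_one]
        rw [hqb_sum])
      (by
        intro zn h
        have h2 : 0 < q zn.2 zn.1 / (N:ℝ) := h
        have hq : 0 < q zn.2 zn.1 := by
          rcases div_pos_iff.mp h2 with ⟨h3, _⟩ | ⟨_, h4⟩
          · exact h3
          · linarith
        exact mul_pos (hqb_pos zn.2 zn.1 hq) (habs zn.2 zn.1 hq))
    have heq : (∑ zn : Z × Fin N, (q zn.2 zn.1 / (N:ℝ)) *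
          Real.log ((q zn.2 zn.1 / (N:ℝ)) / (qb zn.1 * pd zn.1 zn.2)))
        = (1 / (N:ℝ)) * I2 - (1 / (N:ℝ)) * A - Real.log N := by
      have hpt : ∀ (z : Z) (n : Fin N),
          (q n z / (N:ℝ)) * Real.log ((q n z / (N:ℝ)) / (qb z * pd z n))
          = (1 / (N:ℝ)) * (q n z * Real.log (q n z / qb z)
              - q n z * Real.log (pd z n) - q n z * Real.log N) := by
        intro z n
        rcases eq_or_lt_of_le (hq_nonneg n z) with h | h
        · rw [← h]; ring
        · have hq0 := ne_of_gt h
          have hqb0 := ne_of_gt (hqb_pos n z h)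
          have hpd0 := ne_of_gt (habs n z h)
          rw [div_div, Real.log_div hq0 (by positivity),
            Real.log_mul hNr0 (by positivity), Real.log_mul hqb0 hpd0,
            Real.log_div hq0 hqb0]
          ring
      rw [Fintype.sum_prod_type]
      simp_rw [hpt]
      simp_rw [← Finset.mul_sum]
      have : ∑ z : Z, ∑ n : Fin N, (q n z * Real.log (q n z / qb z)
              - q n z * Real.log (pd z n) - q n z * Real.log N)
          = I2 - A - (N:ℝ) * Real.log N := by
        simp_rw [Finset.sum_sub_distrib]
        rw [Finset.sum_comm (f := fun z n => q n z * Real.log (q n z / qb z)),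
          Finset.sum_comm (f := fun z n => q n z * Real.log (pd z n)),
          Finset.sum_comm (f := fun z n => q n z * Real.log (N:ℝ))]
        rw [← hI2, ← hA]
        congr 1
        simp_rw [← Finset.sum_mul, hq_sum]
        simp
      rw [this]
      field_simp
    rw [heq] at hG
    linarith
  -- assemble
  rw [eI]
  have eB' : (1 / (N:ℝ)) * B = (1 / (N:ℝ)) * I2 + K := by
    rw [eB]; field_simp
  rw [eB']
  nlinarith [key]
end
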